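/- Let 1 ≤ t ≤ d and let Z ⊆ ℝ^d be a k-dimensional linear subspace with k ≥ d − t. Then max_{j∈{1,…,t}} ‖Proj_Z(e_j)‖₂ ≥ √((k − (d − t))/t), and consequently min_{j∈{1,…,t}} dist₂(e_j, Z) ≤ √((d − k)/t). -/

import Mathlib

open Finset RealInnerProductSpace

/-- For `1 ≤ t ≤ d` and a `k`-dimensional subspace `Z ⊆ ℝ^d` with
`k ≥ d - t`, some standard basis vector `e_j` with `j ∈ {1,…,t}` has orthogonal
projection onto `Z` of norm at least `√((k-(d-t))/t)`, and consequently some such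
`e_j` is within distance `√((d-k)/t)` of `Z`. -/
theorem max_proj_norm_ge_and_min_dist_le_first_t
    (d t k : ℕ) (ht1 : 1 ≤ t) (htd : t ≤ d)
    (Z : Submodule ℝ (EuclideanSpace ℝ (Fin d)))
    (hk : Module.finrank ℝ Z = k) (hktd : d - t ≤ k) :
    (∃ j : Fin d, (j : ℕ) < t ∧
      Real.sqrt (((k : ℝ) - ((d : ℝ) - (t : ℝ))) / t) ≤
        ‖(Z.orthogonalProjection (EuclideanSpace.single j 1) :
            EuclideanSpace ℝ (Fin d))‖) ∧
    (∃ j : Fin d, (j : ℕ) < t ∧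
      Metric.infDist (EuclideanSpace.single j 1) (Z : Set (EuclideanSpace ℝ (Fin d))) ≤
        Real.sqrt (((d : ℝ) - (k : ℝ)) / t)) := by
  classical
  set E := EuclideanSpace ℝ (Fin d)
  set P : E → E := fun x => (Z.orthogonalProjectionOnto x : E) with hP
  set f : Fin d → ℝ := fun j => ‖P (EuclideanSpace.single j 1)‖ ^ 2 with hf
  have hf_nonneg : ∀ j, 0 ≤ f j := fun j => sq_nonneg _
  have hf_le_one : ∀ j, f j ≤ 1 := by
    intro j
    have h1 : ‖P (EuclideanSpace.single j 1)‖ ≤ 1 := by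
      have h2 := (Z.orthogonalProjectionOnto).le_opNorm (EuclideanSpace.single j (1:ℝ))
      have h3 := Submodule.orthogonalProjectionOnto_norm_le Z
      have h4 : ‖EuclideanSpace.single j (1:ℝ)‖ = 1 := by simp
      have h5 : ‖P (EuclideanSpace.single j 1)‖
          = ‖Z.orthogonalProjectionOnto (EuclideanSpace.single j (1:ℝ))‖ := rfl
      rw [h5]
      nlinarith [norm_nonneg (EuclideanSpace.single j (1:ℝ))]
    exact pow_le_one₀ (n := 2) (norm_nonneg _) h1
  -- key : total sum
  let b := stdOrthonormalBasis ℝ Z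
  have hnormsq : ∀ w : Z, (‖w‖:ℝ) ^ 2 = ∑ i, (⟪b i, w⟫) ^ 2 := by
    intro w
    rw [← b.repr.norm_map w, EuclideanSpace.norm_eq, Real.sq_sqrt (by positivity)]
    simp_rw [b.repr_apply_apply, Real.norm_eq_abs, sq_abs]
  have hsum : ∑ j, f j = (k : ℝ) := by
    have h1 : ∀ j : Fin d, f j = ∑ i, (((b i : E) j) : ℝ) ^ 2 := by
      intro j
      have : f j = ‖(Z.orthogonalProjectionOnto (EuclideanSpace.single j 1) : Z)‖ ^ 2 := by
        simp [hf, hP]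
      rw [this, hnormsq]
      congr 1; ext i
      rw [Submodule.inner_orthogonalProjectionOnto_eq_of_mem_left]
      have := EuclideanSpace.inner_single_right (𝕜 := ℝ) j (1:ℝ) (b i : E)
      rw [this]; ring_nf; simp
    rw [Finset.sum_congr rfl (fun j _ => h1 j), Finset.sum_comm]
    have h2 : ∀ i, ∑ j, (((b i : E) j) : ℝ) ^ 2 = 1 := by
      intro i
      have hb : ‖(b i : E)‖ = 1 := by
        exact b.orthonormal.1 i
      have := EuclideanSpace.norm_eq (b i : E)
      rw [hb] at this
      have h3 : (1:ℝ) = Real.sqrt (∑ j, ‖(b i : E) j‖ ^ 2) := this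
      have := congrArg (fun x => x ^ 2) h3
      simp only [Real.sq_sqrt (by positivity : (0:ℝ) ≤ ∑ j, ‖(b i : E) j‖ ^ 2)] at this
      simp only [Real.norm_eq_abs, sq_abs, one_pow] at this
      exact this.symm
    rw [Finset.sum_congr rfl (fun i _ => h2 i)]
    simp [hk]
  -- the set of first t indices
  set S : Finset (Fin d) := Finset.univ.filter (fun j => (j:ℕ) < t) with hS
  have hScard : S.card = t := by
    have hmap : S = Finset.map (Fin.castLEEmb htd) Finset.univ := by
      ext j
      simp only [hS, Finset.mem_filter, Finset.mem_univ, true_and, Finset.mem_map,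
        Fin.castLEEmb_apply]
      constructor
      · intro hj; exact ⟨⟨(j:ℕ), hj⟩, by ext; simp⟩
      · rintro ⟨a, rfl⟩; simpa using a.2
    rw [hmap]; simp
  have htpos : (0:ℝ) < t := by exact_mod_cast ht1
  have hdk : ((d:ℝ) - t ≤ (k:ℝ)) := by
    have : ((d - t : ℕ) : ℝ) ≤ (k:ℝ) := by exact_mod_cast hktd
    rwa [Nat.cast_sub htd] at this
  -- sum over S is at least k - (d - t)
  have hSsum : (k:ℝ) - ((d:ℝ) - t) ≤ ∑ j ∈ S, f j := by
    have hsplit : ∑ j ∈ S, f j + ∑ j ∈ Finset.univ.filter (fun j : Fin d => ¬ ((j:ℕ) < t)), f j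
        = ∑ j, f j :=
      Finset.sum_filter_add_sum_filter_not Finset.univ _ f
    have hcard2 : (Finset.univ.filter (fun j : Fin d => ¬ ((j:ℕ) < t))).card = d - t := by
      have h0 := Finset.card_filter_add_card_filter_not
        (s := (Finset.univ : Finset (Fin d))) (p := fun j : Fin d => (j:ℕ) < t)
      rw [← hS] at h0
      simp only [Finset.card_univ, Fintype.card_fin, hScard] at h0
      omega
    have hrest : ∑ j ∈ Finset.univ.filter (fun j : Fin d => ¬ ((j:ℕ) < t)), f j
        ≤ ((d:ℝ) - t) := by
      calc ∑ j ∈ Finset.univ.filter (fun j : Fin d => ¬ ((j:ℕ) < t)), f j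
          ≤ ∑ _j ∈ Finset.univ.filter (fun j : Fin d => ¬ ((j:ℕ) < t)), (1:ℝ) :=
            Finset.sum_le_sum (fun j _ => hf_le_one j)
        _ = ((d - t : ℕ) : ℝ) := by rw [Finset.sum_const, hcard2, nsmul_eq_mul, mul_one]
        _ = ((d:ℝ) - t) := by rw [Nat.cast_sub htd]
    rw [hsum] at hsplit
    linarith [hrest]
  -- pigeonhole
  set c : ℝ := ((k : ℝ) - ((d : ℝ) - (t : ℝ))) / t with hc
  have hSne : S.Nonempty := by
    rw [← Finset.card_pos, hScard]; exact ht1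
  have hconst : ∑ _j ∈ S, c ≤ ∑ j ∈ S, f j := by
    rw [Finset.sum_const, hScard, nsmul_eq_mul, hc]
    rw [mul_div_cancel₀ _ (ne_of_gt htpos)]
    exact hSsum
  obtain ⟨j, hjS, hcf⟩ := Finset.exists_le_of_sum_le hSne hconst
  have hjt : (j:ℕ) < t := by simpa [hS] using hjS
  have hfj : f j = ‖P (EuclideanSpace.single j 1)‖ ^ 2 := rfl
  have hsqrt1 : Real.sqrt c ≤ ‖P (EuclideanSpace.single j 1)‖ := by
    have := Real.sqrt_le_sqrt hcf
    rwa [hfj, Real.sqrt_sq (norm_nonneg _)] at this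
  refine ⟨⟨j, hjt, hsqrt1⟩, ⟨j, hjt, ?_⟩⟩
  -- distance bound
  set u : E := EuclideanSpace.single j 1 with hu
  have hpmem : P u ∈ Z := (Z.orthogonalProjectionOnto u).2
  have hperp : u - P u ∈ Zᗮ := Z.sub_starProjection_mem_orthogonal u
  have hinner : ⟪P u, u - P u⟫ = 0 :=
    (Submodule.inner_right_of_mem_orthogonal hpmem hperp)
  have hpyth : ‖u - P u‖ ^ 2 = 1 - f j := by
    have hadd : ‖P u + (u - P u)‖ ^ 2 = ‖P u‖ ^ 2 + 2 * ⟪P u, u - P u⟫ + ‖u - P u‖ ^ 2 :=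
      norm_add_sq_real _ _
    have h1 : P u + (u - P u) = u := by abel
    have hun : ‖u‖ = 1 := by
      rw [hu]
      rw [show ((1:ℝ) = ((1:ℝ) : ℝ)) from rfl, EuclideanSpace.norm_single]
      exact norm_one
    rw [h1, hun, hinner] at hadd
    norm_num at hadd
    linarith [hadd, hfj]
  have hub : ‖u - P u‖ ^ 2 ≤ ((d:ℝ) - k) / t := by
    have h1c : 1 - c = ((d:ℝ) - k) / t := by
      rw [hc, eq_div_iff (ne_of_gt htpos), sub_mul, div_mul_cancel₀ _ (ne_of_gt htpos)]
      ring
    rw [hpyth, ← h1c]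
    linarith
  have hdist : Metric.infDist u (Z : Set E) ≤ ‖u - P u‖ :=
    (Metric.infDist_le_dist_of_mem hpmem).trans_eq (by rw [dist_eq_norm])
  refine hdist.trans ?_
  have := Real.sqrt_le_sqrt hub
  rwa [Real.sqrt_sq (norm_nonneg _)] at this
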